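/- Let K be a simplicial complex on [m] and α a partition of [m] into r blocks. The canonical action of the subtorus S_α ⊆ T^m on the moment-angle complex Z_K is free if and only if α is nondegenerate for K. Here S_α is the subtorus corresponding to the subgroup of Z^m generated by {e_j − e_{j′} : j, j′ belong to the same block of α}. -/

import Mathlib

open Finset

/-- An abstract simplicial complex on the vertex set `Fin m`. -/
structure SimplicialComplexOn (m : ℕ) where
  faces : Set (Finset (Fin m))
  down_closed : ∀ σ ∈ faces, ∀ τ ⊆ σ, τ ∈ faces
  empty_mem : (∅ : Finset (Fin m)) ∈ faces
  singleton_mem : ∀ j : Fin m, {j} ∈ faces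

/-- `dim K + 1`, i.e. the maximal cardinality of a face of `K`. -/
noncomputable def SimplicialComplexOn.dimAdd1 {m : ℕ} (K : SimplicialComplexOn m) : ℕ :=
  sSup {n : ℕ | ∃ σ ∈ K.faces, σ.card = n}

/-- A partition of `[m]`, encoded as a coloring `c : Fin m → Fin r`
(the block `α_i` being the fiber `c ⁻¹ {i}`), is nondegenerate for `K` if every
face of `K` meets each block in at most one vertex; equivalently, the two
vertices of any 1-simplex of `K` lie in different blocks. -/
def IsNondegenerate {m r : ℕ} (K : SimplicialComplexOn m) (c : Fin m → Fin r) : Prop :=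
  ∀ σ ∈ K.faces, ∀ j ∈ σ, ∀ j' ∈ σ, c j = c j' → j = j'

/-- The moment-angle complex `Z_K ⊆ (D²)^m`: points `z ∈ ℂ^m` with all
`|z_j| ≤ 1` such that the set of coordinates with `|z_j| < 1` is contained in
some face of `K`. -/
def momentAngleComplex {m : ℕ} (K : SimplicialComplexOn m) : Set (Fin m → ℂ) :=
  {z | ∃ σ ∈ K.faces, (∀ j, ‖z j‖ ≤ 1) ∧ ∀ j, j ∉ σ → ‖z j‖ = 1}

/-- Membership in the subtorus `S_α ⊆ T^m` corresponding to the subgroup of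
`ℤ^m` generated by the differences `e_j − e_{j'}` for `j, j'` in the same block
of the partition `α` (encoded by the coloring `c`): it consists exactly of
those `t ∈ T^m` whose coordinates multiply to `1` over each block. -/
def memSubtorus {m r : ℕ} (c : Fin m → Fin r) (t : Fin m → Circle) : Prop :=
  ∀ i : Fin r, ∏ j ∈ Finset.univ.filter (fun j => c j = i), t j = 1

/-- `-1` as an element of the circle. -/
noncomputable def Circle.negOne : Circle := ⟨-1, by simp [Submonoid.unitSphere]⟩

/-- The canonical action of the subtorus `S_α ⊆ T^m` on the moment-angle
complex `Z_K` is free if and only if the partition `α` is nondegenerate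
for `K`. -/
theorem subtorus_action_free_iff_nondegenerate {m r : ℕ}
    (K : SimplicialComplexOn m) (c : Fin m → Fin r) (hc : Function.Surjective c) :
    (∀ t : Fin m → Circle, memSubtorus c t →
        ∀ z ∈ momentAngleComplex K, (fun j => (t j : ℂ) * z j) = z → t = 1) ↔
      IsNondegenerate K c := by
  constructor
  · -- free ⇒ nondegenerate
    intro hfree σ hσ j hj j' hj' hcc
    by_contra hne
    -- build a fixed point with two zero coordinates in the same block
    set t : Fin m → Circle := fun k => if k = j ∨ k = j' then Circle.negOne else 1 with ht
    set z : Fin m → ℂ := fun k => if k = j ∨ k = j' then 0 else 1 with hz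
    have hmem : memSubtorus c t := by
      intro i
      by_cases hi : i = c j
      · subst hi
        have hsub : ({j, j'} : Finset (Fin m)) ⊆ univ.filter (fun k => c k = c j) := by
          intro k hk
          simp only [mem_insert, mem_singleton] at hk
          rcases hk with rfl | rfl <;> simp [hcc]
        rw [← Finset.prod_subset hsub (by
          intro k _ hk
          simp only [mem_insert, mem_singleton, not_or] at hk
          simp [ht, hk.1, hk.2])]
        rw [Finset.prod_pair hne]
        simp only [ht, true_or, or_true, if_true]
        ext
        rw [Circle.coe_mul]
        push_cast [Circle.negOne]
        norm_num
      · apply Finset.prod_eq_one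
        intro k hk
        simp only [mem_filter] at hk
        have hkj : k ≠ j := by rintro rfl; exact hi hk.2.symm
        have hkj' : k ≠ j' := by rintro rfl; exact hi (hk.2.symm.trans hcc.symm)
        simp [ht, hkj, hkj']
    have hzmem : z ∈ momentAngleComplex K := by
      refine ⟨σ, hσ, ?_, ?_⟩
      · intro k
        simp only [hz]
        split <;> simp
      · intro k hk
        have hkj : k ≠ j := by rintro rfl; exact hk hj
        have hkj' : k ≠ j' := by rintro rfl; exact hk hj'
        simp [hz, hkj, hkj']
    have hfix : (fun k => (t k : ℂ) * z k) = z := by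
      funext k
      by_cases hk : k = j ∨ k = j'
      · simp [hz, hk]
      · simp [ht, hz, hk]
    have := congrFun (hfree t hmem z hzmem hfix) j
    simp only [ht, if_pos (Or.inl rfl), Pi.one_apply] at this
    have : ((Circle.negOne : Circle) : ℂ) = 1 := by rw [this]; simp
    norm_num [Circle.negOne] at this
  · -- nondegenerate ⇒ free
    intro hnd t hmem z hzmem hfix
    obtain ⟨σ, hσ, _, hbd⟩ := hzmem
    -- coordinates where z ≠ 0 have t = 1
    have hone : ∀ k, z k ≠ 0 → t k = 1 := by
      intro k hk
      have := congrFun hfix k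
      have h1 : (t k : ℂ) = 1 := mul_right_cancel₀ hk (by rw [one_mul]; exact this)
      exact Circle.coe_eq_one.mp h1
    funext k
    by_cases hk : z k ≠ 0
    · exact hone k hk
    · push_neg at hk
      have hkσ : k ∈ σ := by
        by_contra h
        have := hbd k h
        rw [hk] at this
        simp at this
      have := hmem (c k)
      rw [Finset.prod_eq_single k (fun b hb hbk => ?_) (by simp)] at this
      · exact this
      · -- b in same block, b ≠ k ⇒ z b ≠ 0 ⇒ t b = 1
        simp only [mem_filter, mem_univ, true_and] at hb
        apply hone
        intro hzb
        have hbσ : b ∈ σ := by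
          by_contra h
          have := hbd b h
          rw [hzb] at this
          simp at this
        exact hbk (hnd σ hσ b hbσ k hkσ hb)
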